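/- In the DGA A, the element a₀c is a cycle that is not a boundary; hence the homology class of a₀c is nonzero in H(A). -/
import Mathlib


open MvPolynomial

/-- The polynomial algebra over F₂ on generators
a₀, a₁, a₂, a₃, a₀₁, a₁₂, a₂₃, c, a₀₂, a₁₃ (indices 0,…,9). -/
abbrev P : Type := MvPolynomial (Fin 10) (ZMod 2)

/-- Values of the differential of A on the generators:
d(a₀)=d(a₁)=d(a₂)=d(a₃)=d(c)=0, d(a₀₁)=a₀a₁, d(a₁₂)=a₁a₂, d(a₂₃)=a₂a₃,
d(a₀₂)=a₀a₁₂+a₀₁a₂, d(a₁₃)=a₁a₂₃+a₁₂a₃. -/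
noncomputable def dvalA : Fin 10 → P :=
  ![0, 0, 0, 0, X 0 * X 1, X 1 * X 2, X 2 * X 3, 0,
    X 0 * X 5 + X 4 * X 2, X 1 * X 6 + X 5 * X 3]

/-- The differential of A: the unique F₂-linear derivation with the values
`dvalA` on the generators (Leibniz rule holds automatically). -/
noncomputable def dA : P → P := fun p => mkDerivation (ZMod 2) dvalA p

/-- Values for the evaluation homomorphism killing X1, X2, X3, X5. -/
noncomputable def vA : Fin 10 → P := ![X 0, 0, 0, 0, X 4, 0, X 6, X 7, X 8, X 9]

/-- Evaluation killing X1, X2, X3, X5. -/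
noncomputable def phiA : P →ₐ[ZMod 2] P := aeval vA

lemma phiA_X (i : Fin 10) : phiA (X i) = vA i := aeval_X vA i

lemma phiA_dval (i : Fin 10) : phiA (dvalA i) = 0 := by
  fin_cases i
  · show phiA (dvalA 0) = 0; rw [show dvalA 0 = 0 from rfl, map_zero]
  · show phiA (dvalA 1) = 0; rw [show dvalA 1 = 0 from rfl, map_zero]
  · show phiA (dvalA 2) = 0; rw [show dvalA 2 = 0 from rfl, map_zero]
  · show phiA (dvalA 3) = 0; rw [show dvalA 3 = 0 from rfl, map_zero]
  · show phiA (dvalA 4) = 0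
    rw [show dvalA 4 = X 0 * X 1 from rfl, map_mul, phiA_X 1,
      show vA 1 = 0 from rfl, mul_zero]
  · show phiA (dvalA 5) = 0
    rw [show dvalA 5 = X 1 * X 2 from rfl, map_mul, phiA_X 1,
      show vA 1 = 0 from rfl, zero_mul]
  · show phiA (dvalA 6) = 0
    rw [show dvalA 6 = X 2 * X 3 from rfl, map_mul, phiA_X 2,
      show vA 2 = 0 from rfl, zero_mul]
  · show phiA (dvalA 7) = 0; rw [show dvalA 7 = 0 from rfl, map_zero]
  · show phiA (dvalA 8) = 0
    rw [show dvalA 8 = X 0 * X 5 + X 4 * X 2 from rfl, map_add, map_mul, map_mul,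
      phiA_X 5, phiA_X 2, show vA 5 = 0 from rfl, show vA 2 = 0 from rfl,
      mul_zero, mul_zero, add_zero]
  · show phiA (dvalA 9) = 0
    rw [show dvalA 9 = X 1 * X 6 + X 5 * X 3 from rfl, map_add, map_mul, map_mul,
      phiA_X 1, phiA_X 5, show vA 1 = 0 from rfl, show vA 5 = 0 from rfl,
      zero_mul, zero_mul, add_zero]

lemma phiA_dA (p : P) : phiA (dA p) = 0 := by
  induction p using MvPolynomial.induction_on with
  | C a => simp [dA]
  | add p q hp hq =>
      simp only [dA] at *
      rw [map_add, map_add, hp, hq, add_zero]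
  | mul_X p i hp =>
      simp only [dA] at *
      rw [Derivation.leibniz, mkDerivation_X, smul_eq_mul, smul_eq_mul,
        map_add, map_mul, map_mul, hp, phiA_dval, mul_zero, mul_zero, add_zero]

/-- In A, the element a₀c is a cycle that is not a boundary, so its homology
class is nonzero in H(A). -/
theorem stmt_18 :
    dA (X 0 * X 7) = 0 ∧
    (X 0 * X 7 : P) ≠ 0 ∧
    ¬ ∃ u : P, dA u = X 0 * X 7 := by
  refine ⟨?_, mul_ne_zero (X_ne_zero 0) (X_ne_zero 7), ?_⟩
  · simp only [dA]
    rw [Derivation.leibniz, mkDerivation_X, mkDerivation_X,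
      show dvalA 7 = 0 from rfl, show dvalA 0 = 0 from rfl, smul_zero,
      smul_zero, add_zero]
  · rintro ⟨u, hu⟩
    have h0 := phiA_dA u
    rw [hu, map_mul, phiA_X 0, phiA_X 7, show vA 0 = X 0 from rfl,
      show vA 7 = X 7 from rfl] at h0
    exact mul_ne_zero (X_ne_zero 0) (X_ne_zero 7) h0
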